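/- Let F be the free group on x_1,...,x_{n+1} and let H ≤ F be the subgroup generated by x_{n+1}^k together with all elements x_{n+1}^j x_i x_{n+1}^{-(j+1)} for 1 ≤ i ≤ n and 0 ≤ j ≤ k-1. Then H equals the kernel of the homomorphism g_k : F → Z/k sending each generator to 1. -/

import Mathlib

def gk (n k : ℕ) : FreeGroup (Fin (n + 1)) →* Multiplicative (ZMod k) :=
  FreeGroup.lift fun _ => Multiplicative.ofAdd (1 : ZMod k)

def xlast (n : ℕ) : FreeGroup (Fin (n + 1)) := FreeGroup.of (Fin.last n)

/-- the subgroup generated by `x_{n+1}^k` together with the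
elements `x_{n+1}^j x_i x_{n+1}^{-(j+1)}` (`1 ≤ i ≤ n`, `0 ≤ j ≤ k-1`) is
exactly the kernel of `g_k`. -/
theorem closure_eq_ker (n k : ℕ) (hk : 0 < k) :
    Subgroup.closure
      ({(xlast n) ^ k} ∪
        {w | ∃ (i : Fin n) (j : ℕ), j < k ∧
          w = (xlast n) ^ j * FreeGroup.of i.castSucc * ((xlast n) ^ (j + 1))⁻¹}) =
      MonoidHom.ker (gk n k) := by
  set x := xlast n with hx
  set S := ({(xlast n) ^ k} ∪
        {w | ∃ (i : Fin n) (j : ℕ), j < k ∧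
          w = (xlast n) ^ j * FreeGroup.of i.castSucc * ((xlast n) ^ (j + 1))⁻¹} :
        Set (FreeGroup (Fin (n+1)))) with hS
  set H := Subgroup.closure S with hH
  have hxk : x ^ k ∈ H := Subgroup.subset_closure (Or.inl rfl)
  have hgen : ∀ (i : Fin n) (j : ℕ), j < k →
      x ^ j * FreeGroup.of i.castSucc * (x ^ (j + 1))⁻¹ ∈ H := fun i j hj =>
    Subgroup.subset_closure (Or.inr ⟨i, j, hj, rfl⟩)
  -- conjugation by x preserves H
  have hconj1 : ∀ h ∈ H, x * h * x⁻¹ ∈ H := by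
    intro h hh
    refine Subgroup.closure_induction (fun w hw => ?_) (by simpa using H.one_mem)
      (fun a b _ _ ha hb => by simpa [mul_assoc] using mul_mem ha hb)
      (fun a _ ha => by simpa [mul_assoc, mul_inv_rev] using inv_mem ha) hh
    rcases hw with rfl | ⟨i, j, hj, rfl⟩
    · have : x * x ^ k * x⁻¹ = x ^ k := by group
      rw [this]; exact hxk
    · rcases lt_or_eq_of_le (Nat.succ_le_of_lt hj) with hj1 | hj1
      · have : x * (x ^ j * FreeGroup.of i.castSucc * (x ^ (j + 1))⁻¹) * x⁻¹ =
            x ^ (j+1) * FreeGroup.of i.castSucc * (x ^ (j + 2))⁻¹ := by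
          rw [pow_succ, pow_succ, pow_succ]; group
        rw [this]; exact hgen i (j+1) hj1
      · -- j + 1 = k
        have : x * (x ^ j * FreeGroup.of i.castSucc * (x ^ (j + 1))⁻¹) * x⁻¹ =
            x ^ k * (x ^ 0 * FreeGroup.of i.castSucc * (x ^ 1)⁻¹) * (x ^ k)⁻¹ := by
          rw [← hj1, pow_succ]; group
        rw [this]
        exact mul_mem (mul_mem hxk (hgen i 0 hk)) (inv_mem hxk)
  have hconj1' : ∀ h ∈ H, x⁻¹ * h * x ∈ H := by
    intro h hh
    refine Subgroup.closure_induction (fun w hw => ?_) (by simpa using H.one_mem)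
      (fun a b _ _ ha hb => by simpa [mul_assoc] using mul_mem ha hb)
      (fun a _ ha => by simpa [mul_assoc, mul_inv_rev] using inv_mem ha) hh
    rcases hw with rfl | ⟨i, j, hj, rfl⟩
    · have : x⁻¹ * x ^ k * x = x ^ k := by group
      rw [this]; exact hxk
    · rcases Nat.eq_zero_or_pos j with rfl | hj0
      · -- j = 0
        have : x⁻¹ * (x ^ 0 * FreeGroup.of i.castSucc * (x ^ (0 + 1))⁻¹) * x =
            (x ^ k)⁻¹ * (x ^ (k-1) * FreeGroup.of i.castSucc * (x ^ ((k-1) + 1))⁻¹) * x ^ k := by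
          rw [Nat.sub_add_cancel hk]
          have hksplit : x ^ k = x ^ (k-1) * x := by
            rw [← pow_succ, Nat.sub_add_cancel hk]
          rw [hksplit]; group
        rw [this]
        exact mul_mem (mul_mem (inv_mem hxk) (hgen i (k-1) (Nat.sub_lt hk one_pos))) hxk
      · have : x⁻¹ * (x ^ j * FreeGroup.of i.castSucc * (x ^ (j + 1))⁻¹) * x =
            x ^ (j-1) * FreeGroup.of i.castSucc * (x ^ ((j-1) + 1))⁻¹ := by
          have h1 : x ^ j = x * x ^ (j-1) := by
            rw [← pow_succ', Nat.sub_add_cancel hj0]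
          have h2 : (j - 1) + 1 + 1 = j + 1 := by omega
          rw [← h2, h1, pow_succ]; group
        rw [this]
        exact hgen i (j-1) (by omega)
  have hnorm : x ∈ Subgroup.normalizer (H : Set (FreeGroup (Fin (n+1)))) := by
    rw [Subgroup.mem_normalizer_iff]
    intro h
    constructor
    · exact hconj1 h
    · intro hh
      have := hconj1' _ hh
      simpa [mul_assoc] using this
  have hconj : ∀ (m : ℤ) (h : FreeGroup (Fin (n+1))), h ∈ H →
      x ^ m * h * (x ^ m)⁻¹ ∈ H := by
    intro m h hh
    have : x ^ m ∈ Subgroup.normalizer (H : Set (FreeGroup (Fin (n+1)))) := zpow_mem hnorm m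
    exact (Subgroup.mem_normalizer_iff.1 this h).1 hh
  have hconjn : ∀ (m : ℕ) (h : FreeGroup (Fin (n+1))), h ∈ H →
      x ^ m * h * (x ^ m)⁻¹ ∈ H := by
    intro m h hh
    have := hconj (m : ℤ) h hh
    simpa [zpow_natCast] using this
  have hconjn' : ∀ (m : ℕ) (h : FreeGroup (Fin (n+1))), h ∈ H →
      (x ^ m)⁻¹ * h * x ^ m ∈ H := by
    intro m h hh
    have := hconj (-(m : ℤ)) h hh
    simpa [zpow_neg, zpow_natCast] using this
  -- key claim
  have key : ∀ g : FreeGroup (Fin (n+1)), ∃ m : ℕ, m < k ∧ g * (x ^ m)⁻¹ ∈ H := by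
    intro g
    induction g using FreeGroup.induction_on with
    | C1 => exact ⟨0, hk, by simpa using H.one_mem⟩
    | of i =>
      induction i using Fin.lastCases with
      | last =>
        rcases eq_or_lt_of_le (Nat.one_le_iff_ne_zero.2 hk.ne') with hk1 | hk1
        · refine ⟨0, hk, ?_⟩
          have : FreeGroup.of (Fin.last n) * ((x : FreeGroup (Fin (n+1))) ^ 0)⁻¹ = x ^ k := by
            rw [← hk1, hx, xlast]; group
          rw [this]; exact hxk
        · refine ⟨1, hk1, ?_⟩
          have : FreeGroup.of (Fin.last n) * ((x : FreeGroup (Fin (n+1))) ^ 1)⁻¹ = 1 := by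
            rw [hx, xlast]; group
          rw [this]; exact H.one_mem
      | cast i =>
        rcases eq_or_lt_of_le (Nat.one_le_iff_ne_zero.2 hk.ne') with hk1 | hk1
        · refine ⟨0, hk, ?_⟩
          have : FreeGroup.of i.castSucc * ((x : FreeGroup (Fin (n+1))) ^ 0)⁻¹ =
              (x ^ 0 * FreeGroup.of i.castSucc * (x ^ (0+1))⁻¹) * x ^ k := by
            rw [← hk1]; group
          rw [this]; exact mul_mem (hgen i 0 hk) hxk
        · refine ⟨1, hk1, ?_⟩
          have : FreeGroup.of i.castSucc * ((x : FreeGroup (Fin (n+1))) ^ 1)⁻¹ =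
              x ^ 0 * FreeGroup.of i.castSucc * (x ^ (0+1))⁻¹ := by group
          rw [this]; exact hgen i 0 hk
    | inv_of i ih =>
      obtain ⟨m, hm, hmem⟩ := ih
      rcases Nat.eq_zero_or_pos m with rfl | hm0
      · refine ⟨0, hk, ?_⟩
        have : (FreeGroup.of i)⁻¹ * ((x : FreeGroup (Fin (n+1))) ^ 0)⁻¹ =
            (FreeGroup.of i * (x ^ 0)⁻¹)⁻¹ := by group
        rw [this]; exact inv_mem hmem
      · refine ⟨k - m, Nat.sub_lt hk hm0, ?_⟩
        have hsum : x ^ (k - m) * x ^ m = x ^ k := by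
          rw [← pow_add, Nat.sub_add_cancel hm.le]
        have heq : (FreeGroup.of i)⁻¹ * (x ^ (k - m))⁻¹ =
            (x ^ m)⁻¹ * (FreeGroup.of i * (x ^ m)⁻¹)⁻¹ * x ^ m * (x ^ k)⁻¹ := by
          rw [← hsum]; group
        rw [heq]
        exact mul_mem (hconjn' m _ (inv_mem hmem)) (inv_mem hxk)
    | mul a b iha ihb =>
      obtain ⟨m1, hm1, h1⟩ := iha
      obtain ⟨m2, hm2, h2⟩ := ihb
      by_cases hlt : m1 + m2 < k
      · refine ⟨m1 + m2, hlt, ?_⟩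
        have heq : a * b * (x ^ (m1 + m2))⁻¹ =
            (a * (x ^ m1)⁻¹) * (x ^ m1 * (b * (x ^ m2)⁻¹) * (x ^ m1)⁻¹) := by
          rw [pow_add]; group
        rw [heq]
        exact mul_mem h1 (hconjn m1 _ h2)
      · refine ⟨m1 + m2 - k, by omega, ?_⟩
        have hsum : x ^ (m1 + m2 - k) * x ^ k = x ^ (m1 + m2) := by
          rw [← pow_add, Nat.sub_add_cancel (by omega)]
        have heq : a * b * (x ^ (m1 + m2 - k))⁻¹ =
            (a * (x ^ m1)⁻¹) * (x ^ m1 * (b * (x ^ m2)⁻¹) * (x ^ m1)⁻¹) *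
              (x ^ (m1 + m2) * (x ^ (m1 + m2 - k))⁻¹) := by
          rw [pow_add]; group
        have heq2 : x ^ (m1 + m2) * (x ^ (m1 + m2 - k))⁻¹ = x ^ k := by
          rw [← hsum]; group
        rw [heq, heq2]
        exact mul_mem (mul_mem h1 (hconjn m1 _ h2)) hxk
  -- finish
  have hle : H ≤ MonoidHom.ker (gk n k) := by
    rw [hH, Subgroup.closure_le]
    rintro w (rfl | ⟨i, j, hj, rfl⟩)
    · simp [MonoidHom.mem_ker, gk, xlast, map_pow, ← ofAdd_nsmul]
    · simp [MonoidHom.mem_ker, gk, xlast, map_pow, map_mul, ← ofAdd_nsmul, ← ofAdd_add]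
  refine le_antisymm hle ?_
  intro g hg
  obtain ⟨m, hm, hmem⟩ := key g
  have hgx : gk n k (x ^ m) = Multiplicative.ofAdd ((m : ZMod k)) := by
    simp [gk, hx, xlast, map_pow, ← ofAdd_nsmul]
  have h1 : gk n k (g * (x ^ m)⁻¹) = (Multiplicative.ofAdd ((m : ZMod k)))⁻¹ := by
    rw [map_mul, map_inv, hgx, MonoidHom.mem_ker.1 hg, one_mul]
  have h2 : (Multiplicative.ofAdd ((m : ZMod k)))⁻¹ = 1 := by
    rw [← h1]; exact MonoidHom.mem_ker.1 (hle hmem)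
  have h3 : (m : ZMod k) = 0 := by
    have := inv_eq_one.1 h2
    simpa using this
  haveI : NeZero k := ⟨hk.ne'⟩
  have h4 : k ∣ m := (ZMod.natCast_eq_zero_iff m k).1 h3
  have hm0 : m = 0 := Nat.eq_zero_of_dvd_of_lt h4 hm
  subst hm0
  simpa using hmem
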